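/- Fix d ≥ 1, m ≥ 1, an integer k ≥ 1 and n = km, and let the environment variables ω(i,y) and the m-tree environment copies ω^u(j,y) be i.i.d. standard Gaussian. Then for all paths x, x' ∈ Π_n: (i) 𝔼[H_n(x) H_n(x')] = Σ_{i=1}^n 1_{x_i = x'_i}; (ii) 𝔼[H_n^{m-tree}(x) H_n^{m-tree}(x')] = Σ_{l=0}^{k−1} (∏_{r=1}^{l} 1_{x_{rm} = x'_{rm}}) Σ_{j=1}^{m} 1_{x_{lm+j} = x'_{lm+j}}; (iii) 𝔼[H_n^{m-tree}(x) H_n^{m-tree}(x')] ≤ 𝔼[H_n(x) H_n(x')]; and (iv) 𝔼[H_n(x)^2] = 𝔼[H_n^{m-tree}(x)^2] = n. -/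

import Mathlib

open MeasureTheory ProbabilityTheory Real Finset

noncomputable section

/-- A nearest-neighbour step of the simple random walk on `ℤ^d`, encoded by a
coordinate direction and a sign. -/
def step (d : ℕ) (s : Fin d × Bool) : Fin d → ℤ :=
  fun j => if j = s.1 then (if s.2 then 1 else -1) else 0

/-- Position after `i` steps of the nearest-neighbour path (started at the origin)
with step sequence `s`.  Nearest-neighbour paths in `Π_n` (starting at `0`) are
identified with their step sequences `s : Fin n → Fin d × Bool`. -/
def pos {d n : ℕ} (s : Fin n → Fin d × Bool) (i : ℕ) : Fin d → ℤ :=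
  ∑ j ∈ Finset.univ.filter (fun j : Fin n => (j : ℕ) < i), step d (s j)

/-- The polymer energy `H_n(x) = ∑_{i=1}^n ω(i, x_i)`. -/
def polymerEnergy {Ω : Type*} {d : ℕ} (n : ℕ) (env : ℕ × (Fin d → ℤ) → Ω → ℝ)
    (s : Fin n → Fin d × Bool) (o : Ω) : ℝ :=
  ∑ i ∈ Finset.range n, env (i + 1, pos s (i + 1)) o

/-- The `(x_m, x_{2m}, …, x_{lm})` word indexing the environment block used by the
path `s` in the `l`-th block of the `m`-tree. -/
def treeWord {d n : ℕ} (m : ℕ) (s : Fin n → Fin d × Bool) (l : ℕ) : List (Fin d → ℤ) :=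
  List.ofFn (fun r : Fin l => pos s ((r + 1) * m))

/-- The `m`-tree energy `H_n^{m-tree}(x)`, for `n = k m`:
`∑_{l=0}^{k-1} ∑_{j=1}^{m} ω^{(x_m, …, x_{lm})}(j, x_{lm+j} − x_{lm})`. -/
def treeEnergy {Ω : Type*} {d : ℕ} (n m k : ℕ)
    (envT : List (Fin d → ℤ) × ℕ × (Fin d → ℤ) → Ω → ℝ)
    (s : Fin n → Fin d × Bool) (o : Ω) : ℝ :=
  ∑ l ∈ Finset.range k, ∑ j ∈ Finset.range m,
    envT (treeWord m s l, (j + 1, pos s (l * m + (j + 1)) - pos s (l * m))) o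

/-- An i.i.d. family with common law `ν`: measurable, jointly independent,
identically distributed. -/
def IID {Ω ι : Type*} [MeasurableSpace Ω] (μ : Measure Ω) (f : ι → Ω → ℝ) (ν : Measure ℝ) : Prop :=
  (∀ i, Measurable (f i)) ∧ iIndepFun f μ ∧ ∀ i, Measure.map (f i) μ = ν


open scoped ENNReal NNReal

lemma sq_exp_integrable : Integrable (fun x : ℝ => x ^ 2 * rexp (-(2⁻¹ : ℝ) * x ^ 2)) := by
  have := integrable_rpow_mul_exp_neg_mul_sq (b := 2⁻¹) (by norm_num) (s := 2) (by norm_num)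
  convert this using 2 with x
  rw [← Real.rpow_natCast x 2]
  norm_num

lemma sq_exp_integral : ∫ x : ℝ, x ^ 2 * rexp (-(2⁻¹ : ℝ) * x ^ 2) = Real.sqrt (2 * π) := by
  have hu : ∀ x : ℝ, HasDerivAt (fun y : ℝ => y) 1 x := fun x => hasDerivAt_id x
  have hv : ∀ x : ℝ, HasDerivAt (fun y : ℝ => -rexp (-(2⁻¹ : ℝ) * y ^ 2))
      (x * rexp (-(2⁻¹ : ℝ) * x ^ 2)) x := by
    intro x
    have h1 : HasDerivAt (fun y : ℝ => -(2⁻¹ : ℝ) * y ^ 2) (-(2⁻¹ : ℝ) * (2 * x ^ 1)) x :=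
      (hasDerivAt_pow 2 x).const_mul _
    have h2 : HasDerivAt (fun y : ℝ => -rexp (-(2⁻¹ : ℝ) * y ^ 2))
        (-(rexp (-(2⁻¹ : ℝ) * x ^ 2) * (-(2⁻¹ : ℝ) * (2 * x ^ 1)))) x := (h1.exp).neg
    convert h2 using 1
    ring
  have hint1 : Integrable (fun x : ℝ => x * rexp (-(2⁻¹ : ℝ) * x ^ 2)) :=
    integrable_mul_exp_neg_mul_sq (by norm_num)
  have hint0 : Integrable (fun x : ℝ => rexp (-(2⁻¹ : ℝ) * x ^ 2)) :=
    integrable_exp_neg_mul_sq (by norm_num)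
  have key := integral_mul_deriv_eq_deriv_mul_of_integrable (fun x _ => hu x) (fun x _ => hv x)
    (by simpa [Pi.mul_def, mul_comm, mul_assoc, mul_left_comm, sq] using sq_exp_integrable)
    (by simp only [Pi.mul_def, one_mul]; exact hint0.neg)
    (by simp only [Pi.mul_def, mul_neg]; exact hint1.neg)
  simp only [one_mul, integral_neg, neg_neg] at key
  have h2 : ∫ x : ℝ, x * (x * rexp (-(2⁻¹:ℝ) * x ^ 2)) = ∫ x : ℝ, rexp (-(2⁻¹:ℝ) * x ^ 2) := key
  rw [show (fun x : ℝ => x ^ 2 * rexp (-(2⁻¹:ℝ) * x ^ 2)) = fun x : ℝ => x * (x * rexp (-(2⁻¹:ℝ) * x ^ 2)) by funext x; ring]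
  rw [h2, integral_gaussian]
  rw [show π / (2⁻¹:ℝ) = 2 * π by ring]

lemma pdf_repr : gaussianReal 0 1 = (volume : Measure ℝ).withDensity
    (fun x => ((gaussianPDFReal 0 1 x).toNNReal : ℝ≥0∞)) := by
  rw [gaussianReal_of_var_ne_zero 0 one_ne_zero]
  rfl

lemma pdf_meas : Measurable (fun x => (gaussianPDFReal 0 1 x).toNNReal) :=
  (measurable_gaussianPDFReal 0 1).real_toNNReal

lemma pdf_eval (x : ℝ) : gaussianPDFReal 0 1 x = (Real.sqrt (2*π))⁻¹ * rexp (-(2⁻¹:ℝ) * x ^ 2) := by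
  simp only [gaussianPDFReal, NNReal.coe_one, mul_one, sub_zero]
  congr 2
  ring

lemma pdf_smul (g : ℝ → ℝ) : ∫ x, g x ∂(gaussianReal 0 1)
    = ∫ x, gaussianPDFReal 0 1 x * g x := by
  rw [pdf_repr, integral_withDensity_eq_integral_smul pdf_meas]
  congr 1; funext x
  simp [NNReal.smul_def, Real.coe_toNNReal _ (gaussianPDFReal_nonneg 0 1 x)]

lemma gauss_sq : ∫ x, x ^ 2 ∂(gaussianReal 0 1) = 1 := by
  rw [pdf_smul]
  have h : ∀ x : ℝ, gaussianPDFReal 0 1 x * x ^ 2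
      = (Real.sqrt (2*π))⁻¹ * (x ^ 2 * rexp (-(2⁻¹:ℝ) * x ^ 2)) := by
    intro x; rw [pdf_eval]; ring
  simp_rw [h]
  rw [integral_const_mul, sq_exp_integral, inv_mul_cancel₀]
  positivity

lemma gauss_sq_integrable : Integrable (fun x : ℝ => x ^ 2) (gaussianReal 0 1) := by
  rw [pdf_repr, integrable_withDensity_iff_integrable_smul pdf_meas]
  have h : (fun x : ℝ => (gaussianPDFReal 0 1 x).toNNReal • (x ^ 2 : ℝ))
      = fun x : ℝ => (Real.sqrt (2*π))⁻¹ * (x ^ 2 * rexp (-(2⁻¹:ℝ) * x ^ 2)) := by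
    funext x
    rw [NNReal.smul_def, Real.coe_toNNReal _ (gaussianPDFReal_nonneg 0 1 x), pdf_eval,
      smul_eq_mul]
    ring
  rw [h]
  exact sq_exp_integrable.const_mul _

lemma gauss_mean : ∫ x, x ∂(gaussianReal 0 1) = 0 := by
  have hmap : Measure.map (fun x : ℝ => (-1 : ℝ) * x) (gaussianReal 0 1) = gaussianReal 0 1 := by
    rw [gaussianReal_map_const_mul]
    norm_num
  have h : ∫ x, x ∂(gaussianReal 0 1) = ∫ x, (-1 : ℝ) * x ∂(gaussianReal 0 1) := by
    conv_lhs => rw [← hmap]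
    rw [integral_map (f := fun x : ℝ => x) (by fun_prop) measurable_id.aestronglyMeasurable]
  simp only [neg_mul, one_mul] at h
  rw [integral_neg] at h
  linarith

lemma gauss_memℒp : MemLp (id : ℝ → ℝ) 2 (gaussianReal 0 1) := by
  rw [memLp_two_iff_integrable_sq aestronglyMeasurable_id]
  simpa using gauss_sq_integrable

section prob
set_option linter.unusedSectionVars false

variable {Ω ι : Type*} [MeasurableSpace Ω] {μ : Measure Ω} [IsProbabilityMeasure μ]
  {f : ι → Ω → ℝ}

lemma iid_memℒp (h : IID μ f (gaussianReal 0 1)) (i : ι) : MemLp (f i) 2 μ := by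
  obtain ⟨hmeas, -, hdist⟩ := h
  have := (memLp_map_measure_iff (f := f i) (g := (id : ℝ → ℝ))
    (by rw [hdist i]; exact measurable_id.aestronglyMeasurable) (hmeas i).aemeasurable).1
    (by rw [hdist i]; exact gauss_memℒp)
  simpa [Function.comp] using this

lemma iid_mean (h : IID μ f (gaussianReal 0 1)) (i : ι) : ∫ o, f i o ∂μ = 0 := by
  obtain ⟨hmeas, -, hdist⟩ := h
  have : ∫ o, f i o ∂μ = ∫ x, x ∂(Measure.map (f i) μ) :=
    (integral_map (hmeas i).aemeasurable measurable_id.aestronglyMeasurable).symm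
  rw [this, hdist i, gauss_mean]

lemma iid_mul_integrable [DecidableEq ι] (h : IID μ f (gaussianReal 0 1)) (i j : ι) :
    Integrable (fun o => f i o * f j o) μ := by
  by_cases hij : i = j
  · subst hij
    have := (memLp_two_iff_integrable_sq (iid_memℒp h i).aestronglyMeasurable).1 (iid_memℒp h i)
    simpa [sq] using this
  · exact ((h.2.1.indepFun hij).integrable_mul ((iid_memℒp h i).integrable one_le_two)
      ((iid_memℒp h j).integrable one_le_two))

lemma iid_cov [DecidableEq ι] (h : IID μ f (gaussianReal 0 1)) (i j : ι) :
    ∫ o, f i o * f j o ∂μ = if i = j then (1 : ℝ) else 0 := by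
  by_cases hij : i = j
  · subst hij
    rw [if_pos rfl]
    have heq : ∫ o, f i o * f i o ∂μ = ∫ x, x * x ∂(Measure.map (f i) μ) :=
      (integral_map (h.1 i).aemeasurable
        (measurable_id.mul measurable_id).aestronglyMeasurable).symm
    rw [heq, h.2.2 i]
    simpa [sq] using gauss_sq
  · rw [if_neg hij]
    have hker := IndepFun.integral_mul_eq_mul_integral (h.2.1.indepFun hij) (iid_memℒp h i).aestronglyMeasurable
      (iid_memℒp h j).aestronglyMeasurable
    have : ∫ o, f i o * f j o ∂μ = (∫ o, f i o ∂μ) * ∫ o, f j o ∂μ := hker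
    rw [this, iid_mean h i, iid_mean h j, mul_zero]

lemma iid_sum_cov [DecidableEq ι] {α : Type*} (h : IID μ f (gaussianReal 0 1))
    (A B : Finset α) (g g' : α → ι) :
    ∫ o, (∑ a ∈ A, f (g a) o) * (∑ b ∈ B, f (g' b) o) ∂μ
      = ∑ a ∈ A, ∑ b ∈ B, (if g a = g' b then (1 : ℝ) else 0) := by
  have hpt : ∀ o, (∑ a ∈ A, f (g a) o) * (∑ b ∈ B, f (g' b) o)
      = ∑ a ∈ A, ∑ b ∈ B, f (g a) o * f (g' b) o := by
    intro o; rw [Finset.sum_mul_sum]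
  simp_rw [hpt]
  rw [integral_finset_sum A (fun a _ => integrable_finset_sum B
    (fun b _ => iid_mul_integrable h (g a) (g' b)))]
  refine Finset.sum_congr rfl fun a _ => ?_
  rw [integral_finset_sum B (fun b _ => iid_mul_integrable h (g a) (g' b))]
  exact Finset.sum_congr rfl fun b _ => iid_cov h (g a) (g' b)

end prob


section comb

lemma sum_range_mul_split {M : Type*} [AddCommMonoid M] (F : ℕ → M) (k m : ℕ) :
    ∑ i ∈ Finset.range (k * m), F i = ∑ l ∈ Finset.range k, ∑ j ∈ Finset.range m, F (l * m + j) := by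
  induction k with
  | zero => simp
  | succ k ih => rw [Nat.succ_mul, Finset.sum_range_add, ih, Finset.sum_range_succ]

variable {d n : ℕ}

lemma pos_zero (s : Fin n → Fin d × Bool) : pos s 0 = 0 := by
  simp [pos]

lemma treeWord_eq_iff {m : ℕ} (s s' : Fin n → Fin d × Bool) (l : ℕ) :
    treeWord m s l = treeWord m s' l
      ↔ ∀ r ∈ Finset.range l, pos s ((r + 1) * m) = pos s' ((r + 1) * m) := by
  unfold treeWord
  rw [List.ofFn_inj]
  constructor
  · intro h r hr
    exact congrFun h ⟨r, Finset.mem_range.1 hr⟩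
  · intro h
    funext r
    exact h r (Finset.mem_range.2 r.2)

lemma treeWord_indicator_eq {m : ℕ} (s s' : Fin n → Fin d × Bool) (l : ℕ) :
    (if treeWord m s l = treeWord m s' l then (1 : ℝ) else 0)
      = ∏ r ∈ Finset.range l, if pos s ((r + 1) * m) = pos s' ((r + 1) * m) then (1 : ℝ) else 0 := by
  rw [Finset.prod_boole]
  exact if_congr (treeWord_eq_iff s s' l) rfl rfl

lemma treeWord_pos_eq {m : ℕ} (s s' : Fin n → Fin d × Bool) (l : ℕ)
    (h : treeWord m s l = treeWord m s' l) : pos s (l * m) = pos s' (l * m) := by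
  cases l with
  | zero => simp [pos_zero]
  | succ r => exact (treeWord_eq_iff s s' (r + 1)).1 h r (Finset.mem_range.2 (Nat.lt_succ_self r))

end comb

/-- Covariance structure of the polymer and `m`-tree energies under i.i.d.
standard Gaussian environments: for all paths `x, x' ∈ Π_n` (encoded by step sequences),
(i) `𝔼[H_n(x) H_n(x')] = ∑_{i=1}^n 1_{x_i = x'_i}`;
(ii) `𝔼[H^{m-tree}(x) H^{m-tree}(x')]
       = ∑_{l=0}^{k−1} (∏_{r=1}^{l} 1_{x_{rm} = x'_{rm}}) ∑_{j=1}^{m} 1_{x_{lm+j} = x'_{lm+j}}`;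
(iii) `𝔼[H^{m-tree}(x) H^{m-tree}(x')] ≤ 𝔼[H_n(x) H_n(x')]`;
(iv) `𝔼[H_n(x)²] = 𝔼[H^{m-tree}(x)²] = n`. -/
theorem gaussian_energy_covariances
    {Ω : Type*} [MeasurableSpace Ω] (μ : Measure Ω) [IsProbabilityMeasure μ]
    (d m k : ℕ) (hd : 1 ≤ d) (hm : 1 ≤ m) (hk : 1 ≤ k) (n : ℕ) (hn : n = k * m)
    (env : ℕ × (Fin d → ℤ) → Ω → ℝ) (henv : IID μ env (gaussianReal 0 1))
    (envT : List (Fin d → ℤ) × ℕ × (Fin d → ℤ) → Ω → ℝ)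
    (henvT : IID μ envT (gaussianReal 0 1)) :
    ∀ s s' : Fin n → Fin d × Bool,
      (∫ o, polymerEnergy n env s o * polymerEnergy n env s' o ∂μ
          = ∑ i ∈ Finset.range n, if pos s (i + 1) = pos s' (i + 1) then (1 : ℝ) else 0)
      ∧ (∫ o, treeEnergy n m k envT s o * treeEnergy n m k envT s' o ∂μ
          = ∑ l ∈ Finset.range k,
              (∏ r ∈ Finset.range l,
                  if pos s ((r + 1) * m) = pos s' ((r + 1) * m) then (1 : ℝ) else 0) *
                ∑ j ∈ Finset.range m,
                  if pos s (l * m + (j + 1)) = pos s' (l * m + (j + 1)) then (1 : ℝ) else 0)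
      ∧ (∫ o, treeEnergy n m k envT s o * treeEnergy n m k envT s' o ∂μ
          ≤ ∫ o, polymerEnergy n env s o * polymerEnergy n env s' o ∂μ)
      ∧ (∫ o, polymerEnergy n env s o ^ 2 ∂μ = n)
      ∧ (∫ o, treeEnergy n m k envT s o ^ 2 ∂μ = n) := by
  have hi : ∀ s s' : Fin n → Fin d × Bool,
      ∫ o, polymerEnergy n env s o * polymerEnergy n env s' o ∂μ
        = ∑ i ∈ Finset.range n, if pos s (i + 1) = pos s' (i + 1) then (1 : ℝ) else 0 := by
    intro s s'
    have h0 := iid_sum_cov henv (Finset.range n) (Finset.range n)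
      (fun i => ((i + 1 : ℕ), pos s (i + 1))) (fun i => ((i + 1 : ℕ), pos s' (i + 1)))
    rw [show (∫ o, polymerEnergy n env s o * polymerEnergy n env s' o ∂μ)
        = ∫ o, (∑ i ∈ Finset.range n, env (i + 1, pos s (i + 1)) o)
            * (∑ i ∈ Finset.range n, env (i + 1, pos s' (i + 1)) o) ∂μ from rfl, h0]
    refine Finset.sum_congr rfl fun i hi => ?_
    rw [Finset.sum_eq_single_of_mem i hi]
    · by_cases hp : pos s (i + 1) = pos s' (i + 1)
      · rw [if_pos (by rw [hp]), if_pos hp]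
      · rw [if_neg (fun hc => hp (by injection hc)), if_neg hp]
    · intro b _ hb
      exact if_neg (fun hc => hb (by injection hc with h1 h2; omega))
  have hii : ∀ s s' : Fin n → Fin d × Bool,
      ∫ o, treeEnergy n m k envT s o * treeEnergy n m k envT s' o ∂μ
        = ∑ l ∈ Finset.range k,
            (∏ r ∈ Finset.range l,
                if pos s ((r + 1) * m) = pos s' ((r + 1) * m) then (1 : ℝ) else 0) *
              ∑ j ∈ Finset.range m,
                if pos s (l * m + (j + 1)) = pos s' (l * m + (j + 1)) then (1 : ℝ) else 0 := by
    intro s s'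
    have h0 := iid_sum_cov henvT (Finset.range k ×ˢ Finset.range m)
      (Finset.range k ×ˢ Finset.range m)
      (fun p : ℕ × ℕ => (treeWord m s p.1,
        (p.2 + 1, pos s (p.1 * m + (p.2 + 1)) - pos s (p.1 * m))))
      (fun p : ℕ × ℕ => (treeWord m s' p.1,
        (p.2 + 1, pos s' (p.1 * m + (p.2 + 1)) - pos s' (p.1 * m))))
    rw [show (∫ o, treeEnergy n m k envT s o * treeEnergy n m k envT s' o ∂μ)
        = ∫ o, (∑ p ∈ Finset.range k ×ˢ Finset.range m,
              envT (treeWord m s p.1,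
                (p.2 + 1, pos s (p.1 * m + (p.2 + 1)) - pos s (p.1 * m))) o)
            * (∑ p ∈ Finset.range k ×ˢ Finset.range m,
              envT (treeWord m s' p.1,
                (p.2 + 1, pos s' (p.1 * m + (p.2 + 1)) - pos s' (p.1 * m))) o) ∂μ by
      congr 1
      funext o
      rw [treeEnergy, treeEnergy, Finset.sum_product, Finset.sum_product], h0]
    rw [Finset.sum_product]
    refine Finset.sum_congr rfl fun l hl => ?_
    rw [Finset.mul_sum]
    refine Finset.sum_congr rfl fun j hj => ?_
    rw [Finset.sum_product]
    rw [Finset.sum_eq_single_of_mem l hl]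
    · rw [Finset.sum_eq_single_of_mem j hj]
      · rw [← treeWord_indicator_eq]
        by_cases hW : treeWord m s l = treeWord m s' l
        · have hpos := treeWord_pos_eq s s' l hW
          by_cases hp : pos s (l * m + (j + 1)) = pos s' (l * m + (j + 1))
          · rw [if_pos (by rw [hW, hp, hpos]), if_pos hW, if_pos hp, one_mul]
          · rw [if_neg, if_pos hW, if_neg hp, one_mul]
            intro hc
            injection hc with h1 h2
            injection h2 with h3 h4
            rw [hpos] at h4
            exact hp (by simpa using sub_left_injective h4)
        · rw [if_neg (fun hc => hW (by injection hc)), if_neg hW, zero_mul]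
      · intro j' _ hj'
        refine if_neg (fun hc => hj' ?_)
        injection hc with h1 h2
        injection h2 with h3 h4
        omega
    · intro l' _ hl'
      refine Finset.sum_eq_zero fun j' _ => if_neg (fun hc => hl' ?_)
      injection hc with h1 h2
      have := congrArg List.length h1
      simp only [treeWord, List.length_ofFn] at this
      omega
  intro s s'
  refine ⟨hi s s', hii s s', ?_, ?_, ?_⟩
  · have hrange : (∑ i ∈ Finset.range n, if pos s (i + 1) = pos s' (i + 1) then (1 : ℝ) else 0)
        = ∑ l ∈ Finset.range k, ∑ j ∈ Finset.range m,
            if pos s (l * m + j + 1) = pos s' (l * m + j + 1) then (1 : ℝ) else 0 := by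
      rw [show Finset.range n = Finset.range (k * m) from by rw [hn]]
      exact sum_range_mul_split (fun i => if pos s (i + 1) = pos s' (i + 1) then (1 : ℝ) else 0) k m
    rw [hi s s', hii s s', hrange]
    refine Finset.sum_le_sum fun l _ => ?_
    have h1 : (∏ r ∈ Finset.range l,
        if pos s ((r + 1) * m) = pos s' ((r + 1) * m) then (1 : ℝ) else 0) ≤ 1 :=
      Finset.prod_le_one (fun r _ => by positivity) (fun r _ => by split <;> norm_num)
    have h2 : (0 : ℝ) ≤ ∑ j ∈ Finset.range m,
        if pos s (l * m + (j + 1)) = pos s' (l * m + (j + 1)) then (1 : ℝ) else 0 :=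
      Finset.sum_nonneg fun j _ => by positivity
    calc ((∏ r ∈ Finset.range l,
          if pos s ((r + 1) * m) = pos s' ((r + 1) * m) then (1 : ℝ) else 0) *
            ∑ j ∈ Finset.range m,
              (if pos s (l * m + (j + 1)) = pos s' (l * m + (j + 1)) then (1 : ℝ) else 0))
        ≤ (∑ j ∈ Finset.range m,
            (if pos s (l * m + (j + 1)) = pos s' (l * m + (j + 1)) then (1 : ℝ) else 0)) :=
          mul_le_of_le_one_left h2 h1
      _ = ∑ j ∈ Finset.range m,
            (if pos s (l * m + j + 1) = pos s' (l * m + j + 1) then (1 : ℝ) else 0) := by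
          refine Finset.sum_congr rfl fun j _ => ?_
          rw [Nat.add_assoc]
  · rw [show (∫ o, polymerEnergy n env s o ^ 2 ∂μ)
        = ∫ o, polymerEnergy n env s o * polymerEnergy n env s o ∂μ by
      congr 1; funext o; ring, hi s s]
    simp
  · rw [show (∫ o, treeEnergy n m k envT s o ^ 2 ∂μ)
        = ∫ o, treeEnergy n m k envT s o * treeEnergy n m k envT s o ∂μ by
      congr 1; funext o; ring, hii s s]
    simp only [if_pos rfl, Finset.prod_const_one, one_mul, Finset.sum_const,
      Finset.card_range, nsmul_eq_mul, mul_one, Finset.prod_const_one]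
    rw [hn]
    push_cast
    simp [mul_comm]
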